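/- For 0 < a ≤ 1, let ρ₂(a) be the 6×6 matrix (1/(8a+2)) · [[3a+1,0,0,0,2a,0],[0,a,0,0,0,2a],[0,0,0,0,0,0],[0,0,0,0,0,0],[2a,0,0,0,a,0],[0,2a,0,0,0,3a+1]]. Then ρ₂(a) is a 2⊗3 state and it violates the inequality D ≥ N², i.e., D(ρ₂(a)) < N(ρ₂(a))². -/

import Mathlib

open Matrix BigOperators Polynomial
open scoped Kronecker ComplexOrder

noncomputable section

/-- Squared Hilbert–Schmidt norm `‖C‖² = Tr(CᴴC)`. -/
def hsNormSq {d : Type*} [Fintype d] (C : Matrix d d ℂ) : ℝ :=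
  (Matrix.trace (Cᴴ * C)).re

/-- Trace norm `‖X‖₁ = Tr √(XᴴX)`. -/
def traceNorm {d : Type*} [Fintype d] [DecidableEq d] (X : Matrix d d ℂ) : ℝ :=
  (((Matrix.posSemidef_conjTranspose_mul_self X).1.eigenvectorUnitary.1 *
      Matrix.diagonal ((fun r : ℝ => (r : ℂ)) ∘ (√·) ∘ (Matrix.posSemidef_conjTranspose_mul_self X).1.eigenvalues) *
      (star (Matrix.posSemidef_conjTranspose_mul_self X).1.eigenvectorUnitary :
        Matrix d d ℂ)).trace).re

/-- Partial transpose on the first factor: `ρ^Γ((i,k),(j,l)) = ρ((j,k),(i,l))`. -/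
def ptranspose {m n : ℕ} (ρ : Matrix (Fin m × Fin n) (Fin m × Fin n) ℂ) :
    Matrix (Fin m × Fin n) (Fin m × Fin n) ℂ :=
  Matrix.of fun p q => ρ (q.1, p.2) (p.1, q.2)

/-- Negativity `N(ρ) = (‖ρ^Γ‖₁ - 1)/(m-1)`. -/
def negativity {m n : ℕ} (ρ : Matrix (Fin m × Fin n) (Fin m × Fin n) ℂ) : ℝ :=
  (traceNorm (ptranspose ρ) - 1) / ((m : ℝ) - 1)

/-- `ψ` is an orthonormal basis of `ℂ^m` (an orthonormal family of `m` vectors). -/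
def IsONB {m : ℕ} (ψ : Fin m → (Fin m → ℂ)) : Prop :=
  ∀ k l, (∑ i, star (ψ k i) * ψ l i) = if k = l then 1 else 0

/-- The rank-one projector `|v⟩⟨v|`. -/
def proj {m : ℕ} (v : Fin m → ℂ) : Matrix (Fin m) (Fin m) ℂ :=
  Matrix.vecMulVec v (fun j => star (v j))

/-- The von Neumann measurement map
`Π^A(ρ) = ∑ k, (|ψ_k⟩⟨ψ_k| ⊗ I_n) ρ (|ψ_k⟩⟨ψ_k| ⊗ I_n)`. -/
def piA {m n : ℕ} (ψ : Fin m → (Fin m → ℂ))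
    (ρ : Matrix (Fin m × Fin n) (Fin m × Fin n) ℂ) :
    Matrix (Fin m × Fin n) (Fin m × Fin n) ℂ :=
  ∑ k, (proj (ψ k) ⊗ₖ (1 : Matrix (Fin n) (Fin n) ℂ)) * ρ *
       (proj (ψ k) ⊗ₖ (1 : Matrix (Fin n) (Fin n) ℂ))

/-- Geometric discord
`D(ρ) = (m/(m-1)) · inf over von Neumann measurements of ‖ρ - Π^A(ρ)‖²`. -/
def gd {m n : ℕ} (ρ : Matrix (Fin m × Fin n) (Fin m × Fin n) ℂ) : ℝ :=
  ((m : ℝ) / ((m : ℝ) - 1)) *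
    ⨅ ψ : {ψ : Fin m → (Fin m → ℂ) // IsONB ψ}, hsNormSq (ρ - piA ψ.1 ρ)

/-- An `m ⊗ n` state: positive semidefinite with trace one. -/
def IsState {m n : ℕ} (ρ : Matrix (Fin m × Fin n) (Fin m × Fin n) ℂ) : Prop :=
  ρ.PosSemidef ∧ ρ.trace = 1

/-- Reindex a `6 × 6` matrix by `Fin 2 × Fin 3` with the ordering
`(1,1),(1,2),(1,3),(2,1),(2,2),(2,3)`. -/
def ofM6 (M : Matrix (Fin 6) (Fin 6) ℂ) :
    Matrix (Fin 2 × Fin 3) (Fin 2 × Fin 3) ℂ :=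
  Matrix.of fun p q =>
    M ⟨p.1.val * 3 + p.2.val, by have := p.1.isLt; have := p.2.isLt; omega⟩
      ⟨q.1.val * 3 + q.2.val, by have := q.1.isLt; have := q.2.isLt; omega⟩

/-- The family of states `ρ₁(a,b)`. -/
def rho1 (a b : ℝ) : Matrix (Fin 2 × Fin 3) (Fin 2 × Fin 3) ℂ :=
  ofM6 ((1 / (2 * ((a : ℂ)^2 + (b : ℂ)^2))) •
    !![(a:ℂ)^2, 0, 0, 0, (a:ℂ)*(b:ℂ), 0;
       0, (b:ℂ)^2, 0, 0, 0, (a:ℂ)*(b:ℂ);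
       0, 0, 0, 0, 0, 0;
       0, 0, 0, 0, 0, 0;
       (a:ℂ)*(b:ℂ), 0, 0, 0, (b:ℂ)^2, 0;
       0, (a:ℂ)*(b:ℂ), 0, 0, 0, (a:ℂ)^2])


def rho2 (a : ℝ) : Matrix (Fin 2 × Fin 3) (Fin 2 × Fin 3) ℂ :=
  ofM6 ((1 / (8 * (a : ℂ) + 2)) •
      !![3*(a:ℂ)+1, 0, 0, 0, 2*(a:ℂ), 0;
         0, (a:ℂ), 0, 0, 0, 2*(a:ℂ);
         0, 0, 0, 0, 0, 0;
         0, 0, 0, 0, 0, 0;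
         2*(a:ℂ), 0, 0, 0, (a:ℂ), 0;
         0, 2*(a:ℂ), 0, 0, 0, 3*(a:ℂ)+1])

def ent (a : ℝ) : Matrix (Fin 2 × Fin 3) (Fin 2 × Fin 3) ℂ := fun p q =>
  match p, q with
  | (0,0),(0,0) => 3*(a:ℂ)+1
  | (0,0),(1,1) => 2*(a:ℂ)
  | (0,1),(0,1) => (a:ℂ)
  | (0,1),(1,2) => 2*(a:ℂ)
  | (1,1),(0,0) => 2*(a:ℂ)
  | (1,1),(1,1) => (a:ℂ)
  | (1,2),(0,1) => 2*(a:ℂ)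
  | (1,2),(1,2) => 3*(a:ℂ)+1
  | _,_ => 0

@[simp] lemma ent_00_00 (a : ℝ) : ent a (0,0) (0,0) = 3*(a:ℂ)+1 := rfl
@[simp] lemma ent_00_01 (a : ℝ) : ent a (0,0) (0,1) = 0 := rfl
@[simp] lemma ent_00_02 (a : ℝ) : ent a (0,0) (0,2) = 0 := rfl
@[simp] lemma ent_00_10 (a : ℝ) : ent a (0,0) (1,0) = 0 := rfl
@[simp] lemma ent_00_11 (a : ℝ) : ent a (0,0) (1,1) = 2*(a:ℂ) := rfl
@[simp] lemma ent_00_12 (a : ℝ) : ent a (0,0) (1,2) = 0 := rfl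
@[simp] lemma ent_01_00 (a : ℝ) : ent a (0,1) (0,0) = 0 := rfl
@[simp] lemma ent_01_01 (a : ℝ) : ent a (0,1) (0,1) = (a:ℂ) := rfl
@[simp] lemma ent_01_02 (a : ℝ) : ent a (0,1) (0,2) = 0 := rfl
@[simp] lemma ent_01_10 (a : ℝ) : ent a (0,1) (1,0) = 0 := rfl
@[simp] lemma ent_01_11 (a : ℝ) : ent a (0,1) (1,1) = 0 := rfl
@[simp] lemma ent_01_12 (a : ℝ) : ent a (0,1) (1,2) = 2*(a:ℂ) := rfl
@[simp] lemma ent_02_00 (a : ℝ) : ent a (0,2) (0,0) = 0 := rfl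
@[simp] lemma ent_02_01 (a : ℝ) : ent a (0,2) (0,1) = 0 := rfl
@[simp] lemma ent_02_02 (a : ℝ) : ent a (0,2) (0,2) = 0 := rfl
@[simp] lemma ent_02_10 (a : ℝ) : ent a (0,2) (1,0) = 0 := rfl
@[simp] lemma ent_02_11 (a : ℝ) : ent a (0,2) (1,1) = 0 := rfl
@[simp] lemma ent_02_12 (a : ℝ) : ent a (0,2) (1,2) = 0 := rfl
@[simp] lemma ent_10_00 (a : ℝ) : ent a (1,0) (0,0) = 0 := rfl
@[simp] lemma ent_10_01 (a : ℝ) : ent a (1,0) (0,1) = 0 := rfl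
@[simp] lemma ent_10_02 (a : ℝ) : ent a (1,0) (0,2) = 0 := rfl
@[simp] lemma ent_10_10 (a : ℝ) : ent a (1,0) (1,0) = 0 := rfl
@[simp] lemma ent_10_11 (a : ℝ) : ent a (1,0) (1,1) = 0 := rfl
@[simp] lemma ent_10_12 (a : ℝ) : ent a (1,0) (1,2) = 0 := rfl
@[simp] lemma ent_11_00 (a : ℝ) : ent a (1,1) (0,0) = 2*(a:ℂ) := rfl
@[simp] lemma ent_11_01 (a : ℝ) : ent a (1,1) (0,1) = 0 := rfl
@[simp] lemma ent_11_02 (a : ℝ) : ent a (1,1) (0,2) = 0 := rfl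
@[simp] lemma ent_11_10 (a : ℝ) : ent a (1,1) (1,0) = 0 := rfl
@[simp] lemma ent_11_11 (a : ℝ) : ent a (1,1) (1,1) = (a:ℂ) := rfl
@[simp] lemma ent_11_12 (a : ℝ) : ent a (1,1) (1,2) = 0 := rfl
@[simp] lemma ent_12_00 (a : ℝ) : ent a (1,2) (0,0) = 0 := rfl
@[simp] lemma ent_12_01 (a : ℝ) : ent a (1,2) (0,1) = 2*(a:ℂ) := rfl
@[simp] lemma ent_12_02 (a : ℝ) : ent a (1,2) (0,2) = 0 := rfl
@[simp] lemma ent_12_10 (a : ℝ) : ent a (1,2) (1,0) = 0 := rfl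
@[simp] lemma ent_12_11 (a : ℝ) : ent a (1,2) (1,1) = 0 := rfl
@[simp] lemma ent_12_12 (a : ℝ) : ent a (1,2) (1,2) = 3*(a:ℂ)+1 := rfl

def entX (a : ℝ) : Matrix (Fin 2 × Fin 3) (Fin 2 × Fin 3) ℂ := fun p q =>
  match p, q with
  | (0,0),(0,0) => 3*(a:ℂ)+1
  | (0,1),(0,1) => (a:ℂ)
  | (1,1),(1,1) => (a:ℂ)
  | (1,2),(1,2) => 3*(a:ℂ)+1
  | (0,1),(1,0) => 2*(a:ℂ)
  | (1,0),(0,1) => 2*(a:ℂ)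
  | (0,2),(1,1) => 2*(a:ℂ)
  | (1,1),(0,2) => 2*(a:ℂ)
  | _,_ => 0

@[simp] lemma entX_00_00 (a : ℝ) : entX a (0,0) (0,0) = 3*(a:ℂ)+1 := rfl
@[simp] lemma entX_00_01 (a : ℝ) : entX a (0,0) (0,1) = 0 := rfl
@[simp] lemma entX_00_02 (a : ℝ) : entX a (0,0) (0,2) = 0 := rfl
@[simp] lemma entX_00_10 (a : ℝ) : entX a (0,0) (1,0) = 0 := rfl
@[simp] lemma entX_00_11 (a : ℝ) : entX a (0,0) (1,1) = 0 := rfl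
@[simp] lemma entX_00_12 (a : ℝ) : entX a (0,0) (1,2) = 0 := rfl
@[simp] lemma entX_01_00 (a : ℝ) : entX a (0,1) (0,0) = 0 := rfl
@[simp] lemma entX_01_01 (a : ℝ) : entX a (0,1) (0,1) = (a:ℂ) := rfl
@[simp] lemma entX_01_02 (a : ℝ) : entX a (0,1) (0,2) = 0 := rfl
@[simp] lemma entX_01_10 (a : ℝ) : entX a (0,1) (1,0) = 2*(a:ℂ) := rfl
@[simp] lemma entX_01_11 (a : ℝ) : entX a (0,1) (1,1) = 0 := rfl
@[simp] lemma entX_01_12 (a : ℝ) : entX a (0,1) (1,2) = 0 := rfl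
@[simp] lemma entX_02_00 (a : ℝ) : entX a (0,2) (0,0) = 0 := rfl
@[simp] lemma entX_02_01 (a : ℝ) : entX a (0,2) (0,1) = 0 := rfl
@[simp] lemma entX_02_02 (a : ℝ) : entX a (0,2) (0,2) = 0 := rfl
@[simp] lemma entX_02_10 (a : ℝ) : entX a (0,2) (1,0) = 0 := rfl
@[simp] lemma entX_02_11 (a : ℝ) : entX a (0,2) (1,1) = 2*(a:ℂ) := rfl
@[simp] lemma entX_02_12 (a : ℝ) : entX a (0,2) (1,2) = 0 := rfl
@[simp] lemma entX_10_00 (a : ℝ) : entX a (1,0) (0,0) = 0 := rfl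
@[simp] lemma entX_10_01 (a : ℝ) : entX a (1,0) (0,1) = 2*(a:ℂ) := rfl
@[simp] lemma entX_10_02 (a : ℝ) : entX a (1,0) (0,2) = 0 := rfl
@[simp] lemma entX_10_10 (a : ℝ) : entX a (1,0) (1,0) = 0 := rfl
@[simp] lemma entX_10_11 (a : ℝ) : entX a (1,0) (1,1) = 0 := rfl
@[simp] lemma entX_10_12 (a : ℝ) : entX a (1,0) (1,2) = 0 := rfl
@[simp] lemma entX_11_00 (a : ℝ) : entX a (1,1) (0,0) = 0 := rfl
@[simp] lemma entX_11_01 (a : ℝ) : entX a (1,1) (0,1) = 0 := rfl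
@[simp] lemma entX_11_02 (a : ℝ) : entX a (1,1) (0,2) = 2*(a:ℂ) := rfl
@[simp] lemma entX_11_10 (a : ℝ) : entX a (1,1) (1,0) = 0 := rfl
@[simp] lemma entX_11_11 (a : ℝ) : entX a (1,1) (1,1) = (a:ℂ) := rfl
@[simp] lemma entX_11_12 (a : ℝ) : entX a (1,1) (1,2) = 0 := rfl
@[simp] lemma entX_12_00 (a : ℝ) : entX a (1,2) (0,0) = 0 := rfl
@[simp] lemma entX_12_01 (a : ℝ) : entX a (1,2) (0,1) = 0 := rfl
@[simp] lemma entX_12_02 (a : ℝ) : entX a (1,2) (0,2) = 0 := rfl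
@[simp] lemma entX_12_10 (a : ℝ) : entX a (1,2) (1,0) = 0 := rfl
@[simp] lemma entX_12_11 (a : ℝ) : entX a (1,2) (1,1) = 0 := rfl
@[simp] lemma entX_12_12 (a : ℝ) : entX a (1,2) (1,2) = 3*(a:ℂ)+1 := rfl

def matS (a : ℝ) : Matrix (Fin 2 × Fin 3) (Fin 2 × Fin 3) ℂ := fun p q =>
  match p, q with
  | (0,0),(0,0) => (3*(a:ℂ)+1)/(8*(a:ℂ)+2)
  | (1,2),(1,2) => (3*(a:ℂ)+1)/(8*(a:ℂ)+2)
  | (0,1),(0,1) => 9*(a:ℂ)*((Real.sqrt 17 : ℝ) : ℂ)/(17*(8*(a:ℂ)+2))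
  | (0,1),(1,0) => 2*(a:ℂ)*((Real.sqrt 17 : ℝ) : ℂ)/(17*(8*(a:ℂ)+2))
  | (1,0),(0,1) => 2*(a:ℂ)*((Real.sqrt 17 : ℝ) : ℂ)/(17*(8*(a:ℂ)+2))
  | (1,0),(1,0) => 8*(a:ℂ)*((Real.sqrt 17 : ℝ) : ℂ)/(17*(8*(a:ℂ)+2))
  | (0,2),(0,2) => 8*(a:ℂ)*((Real.sqrt 17 : ℝ) : ℂ)/(17*(8*(a:ℂ)+2))
  | (0,2),(1,1) => 2*(a:ℂ)*((Real.sqrt 17 : ℝ) : ℂ)/(17*(8*(a:ℂ)+2))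
  | (1,1),(0,2) => 2*(a:ℂ)*((Real.sqrt 17 : ℝ) : ℂ)/(17*(8*(a:ℂ)+2))
  | (1,1),(1,1) => 9*(a:ℂ)*((Real.sqrt 17 : ℝ) : ℂ)/(17*(8*(a:ℂ)+2))
  | _,_ => 0

@[simp] lemma matS_00_00 (a : ℝ) : matS a (0,0) (0,0) = (3*(a:ℂ)+1)/(8*(a:ℂ)+2) := rfl
@[simp] lemma matS_00_01 (a : ℝ) : matS a (0,0) (0,1) = 0 := rfl
@[simp] lemma matS_00_02 (a : ℝ) : matS a (0,0) (0,2) = 0 := rfl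
@[simp] lemma matS_00_10 (a : ℝ) : matS a (0,0) (1,0) = 0 := rfl
@[simp] lemma matS_00_11 (a : ℝ) : matS a (0,0) (1,1) = 0 := rfl
@[simp] lemma matS_00_12 (a : ℝ) : matS a (0,0) (1,2) = 0 := rfl
@[simp] lemma matS_01_00 (a : ℝ) : matS a (0,1) (0,0) = 0 := rfl
@[simp] lemma matS_01_01 (a : ℝ) : matS a (0,1) (0,1) = 9*(a:ℂ)*((Real.sqrt 17 : ℝ) : ℂ)/(17*(8*(a:ℂ)+2)) := rfl
@[simp] lemma matS_01_02 (a : ℝ) : matS a (0,1) (0,2) = 0 := rfl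
@[simp] lemma matS_01_10 (a : ℝ) : matS a (0,1) (1,0) = 2*(a:ℂ)*((Real.sqrt 17 : ℝ) : ℂ)/(17*(8*(a:ℂ)+2)) := rfl
@[simp] lemma matS_01_11 (a : ℝ) : matS a (0,1) (1,1) = 0 := rfl
@[simp] lemma matS_01_12 (a : ℝ) : matS a (0,1) (1,2) = 0 := rfl
@[simp] lemma matS_02_00 (a : ℝ) : matS a (0,2) (0,0) = 0 := rfl
@[simp] lemma matS_02_01 (a : ℝ) : matS a (0,2) (0,1) = 0 := rfl
@[simp] lemma matS_02_02 (a : ℝ) : matS a (0,2) (0,2) = 8*(a:ℂ)*((Real.sqrt 17 : ℝ) : ℂ)/(17*(8*(a:ℂ)+2)) := rfl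
@[simp] lemma matS_02_10 (a : ℝ) : matS a (0,2) (1,0) = 0 := rfl
@[simp] lemma matS_02_11 (a : ℝ) : matS a (0,2) (1,1) = 2*(a:ℂ)*((Real.sqrt 17 : ℝ) : ℂ)/(17*(8*(a:ℂ)+2)) := rfl
@[simp] lemma matS_02_12 (a : ℝ) : matS a (0,2) (1,2) = 0 := rfl
@[simp] lemma matS_10_00 (a : ℝ) : matS a (1,0) (0,0) = 0 := rfl
@[simp] lemma matS_10_01 (a : ℝ) : matS a (1,0) (0,1) = 2*(a:ℂ)*((Real.sqrt 17 : ℝ) : ℂ)/(17*(8*(a:ℂ)+2)) := rfl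
@[simp] lemma matS_10_02 (a : ℝ) : matS a (1,0) (0,2) = 0 := rfl
@[simp] lemma matS_10_10 (a : ℝ) : matS a (1,0) (1,0) = 8*(a:ℂ)*((Real.sqrt 17 : ℝ) : ℂ)/(17*(8*(a:ℂ)+2)) := rfl
@[simp] lemma matS_10_11 (a : ℝ) : matS a (1,0) (1,1) = 0 := rfl
@[simp] lemma matS_10_12 (a : ℝ) : matS a (1,0) (1,2) = 0 := rfl
@[simp] lemma matS_11_00 (a : ℝ) : matS a (1,1) (0,0) = 0 := rfl
@[simp] lemma matS_11_01 (a : ℝ) : matS a (1,1) (0,1) = 0 := rfl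
@[simp] lemma matS_11_02 (a : ℝ) : matS a (1,1) (0,2) = 2*(a:ℂ)*((Real.sqrt 17 : ℝ) : ℂ)/(17*(8*(a:ℂ)+2)) := rfl
@[simp] lemma matS_11_10 (a : ℝ) : matS a (1,1) (1,0) = 0 := rfl
@[simp] lemma matS_11_11 (a : ℝ) : matS a (1,1) (1,1) = 9*(a:ℂ)*((Real.sqrt 17 : ℝ) : ℂ)/(17*(8*(a:ℂ)+2)) := rfl
@[simp] lemma matS_11_12 (a : ℝ) : matS a (1,1) (1,2) = 0 := rfl
@[simp] lemma matS_12_00 (a : ℝ) : matS a (1,2) (0,0) = 0 := rfl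
@[simp] lemma matS_12_01 (a : ℝ) : matS a (1,2) (0,1) = 0 := rfl
@[simp] lemma matS_12_02 (a : ℝ) : matS a (1,2) (0,2) = 0 := rfl
@[simp] lemma matS_12_10 (a : ℝ) : matS a (1,2) (1,0) = 0 := rfl
@[simp] lemma matS_12_11 (a : ℝ) : matS a (1,2) (1,1) = 0 := rfl
@[simp] lemma matS_12_12 (a : ℝ) : matS a (1,2) (1,2) = (3*(a:ℂ)+1)/(8*(a:ℂ)+2) := rfl



def entD (a : ℝ) : Matrix (Fin 2 × Fin 3) (Fin 2 × Fin 3) ℂ := fun p q =>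
  match p, q with
  | (0,0),(1,1) => 2*(a:ℂ)
  | (0,1),(1,2) => 2*(a:ℂ)
  | (1,1),(0,0) => 2*(a:ℂ)
  | (1,2),(0,1) => 2*(a:ℂ)
  | _,_ => 0

@[simp] lemma entD_00_00 (a : ℝ) : entD a (0,0) (0,0) = 0 := rfl
@[simp] lemma entD_00_01 (a : ℝ) : entD a (0,0) (0,1) = 0 := rfl
@[simp] lemma entD_00_02 (a : ℝ) : entD a (0,0) (0,2) = 0 := rfl
@[simp] lemma entD_00_10 (a : ℝ) : entD a (0,0) (1,0) = 0 := rfl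
@[simp] lemma entD_00_11 (a : ℝ) : entD a (0,0) (1,1) = 2*(a:ℂ) := rfl
@[simp] lemma entD_00_12 (a : ℝ) : entD a (0,0) (1,2) = 0 := rfl
@[simp] lemma entD_01_00 (a : ℝ) : entD a (0,1) (0,0) = 0 := rfl
@[simp] lemma entD_01_01 (a : ℝ) : entD a (0,1) (0,1) = 0 := rfl
@[simp] lemma entD_01_02 (a : ℝ) : entD a (0,1) (0,2) = 0 := rfl
@[simp] lemma entD_01_10 (a : ℝ) : entD a (0,1) (1,0) = 0 := rfl
@[simp] lemma entD_01_11 (a : ℝ) : entD a (0,1) (1,1) = 0 := rfl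
@[simp] lemma entD_01_12 (a : ℝ) : entD a (0,1) (1,2) = 2*(a:ℂ) := rfl
@[simp] lemma entD_02_00 (a : ℝ) : entD a (0,2) (0,0) = 0 := rfl
@[simp] lemma entD_02_01 (a : ℝ) : entD a (0,2) (0,1) = 0 := rfl
@[simp] lemma entD_02_02 (a : ℝ) : entD a (0,2) (0,2) = 0 := rfl
@[simp] lemma entD_02_10 (a : ℝ) : entD a (0,2) (1,0) = 0 := rfl
@[simp] lemma entD_02_11 (a : ℝ) : entD a (0,2) (1,1) = 0 := rfl
@[simp] lemma entD_02_12 (a : ℝ) : entD a (0,2) (1,2) = 0 := rfl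
@[simp] lemma entD_10_00 (a : ℝ) : entD a (1,0) (0,0) = 0 := rfl
@[simp] lemma entD_10_01 (a : ℝ) : entD a (1,0) (0,1) = 0 := rfl
@[simp] lemma entD_10_02 (a : ℝ) : entD a (1,0) (0,2) = 0 := rfl
@[simp] lemma entD_10_10 (a : ℝ) : entD a (1,0) (1,0) = 0 := rfl
@[simp] lemma entD_10_11 (a : ℝ) : entD a (1,0) (1,1) = 0 := rfl
@[simp] lemma entD_10_12 (a : ℝ) : entD a (1,0) (1,2) = 0 := rfl
@[simp] lemma entD_11_00 (a : ℝ) : entD a (1,1) (0,0) = 2*(a:ℂ) := rfl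
@[simp] lemma entD_11_01 (a : ℝ) : entD a (1,1) (0,1) = 0 := rfl
@[simp] lemma entD_11_02 (a : ℝ) : entD a (1,1) (0,2) = 0 := rfl
@[simp] lemma entD_11_10 (a : ℝ) : entD a (1,1) (1,0) = 0 := rfl
@[simp] lemma entD_11_11 (a : ℝ) : entD a (1,1) (1,1) = 0 := rfl
@[simp] lemma entD_11_12 (a : ℝ) : entD a (1,1) (1,2) = 0 := rfl
@[simp] lemma entD_12_00 (a : ℝ) : entD a (1,2) (0,0) = 0 := rfl
@[simp] lemma entD_12_01 (a : ℝ) : entD a (1,2) (0,1) = 2*(a:ℂ) := rfl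
@[simp] lemma entD_12_02 (a : ℝ) : entD a (1,2) (0,2) = 0 := rfl
@[simp] lemma entD_12_10 (a : ℝ) : entD a (1,2) (1,0) = 0 := rfl
@[simp] lemma entD_12_11 (a : ℝ) : entD a (1,2) (1,1) = 0 := rfl
@[simp] lemma entD_12_12 (a : ℝ) : entD a (1,2) (1,2) = 0 := rfl


lemma rho2_eq (a : ℝ) : rho2 a = Matrix.of fun p q => (1/(8*(a:ℂ)+2)) * ent a p q := by
  ext ⟨i,k⟩ ⟨j,l⟩
  fin_cases i <;> fin_cases k <;> fin_cases j <;> fin_cases l <;> rfl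

lemma ptrans_eq (a : ℝ) :
    ptranspose (rho2 a) = Matrix.of fun p q => (1/(8*(a:ℂ)+2)) * entX a p q := by
  ext ⟨i,k⟩ ⟨j,l⟩
  fin_cases i <;> fin_cases k <;> fin_cases j <;> fin_cases l <;> rfl

lemma ht' (a : ℝ) (ha0 : 0 < a) : (8 * (a:ℂ) + 2) ≠ 0 := by
  intro h
  have := congrArg Complex.re h
  simp at this
  nlinarith

lemma rho2_herm (a : ℝ) : (rho2 a).IsHermitian := by
  rw [Matrix.IsHermitian, rho2_eq]
  ext ⟨i,k⟩ ⟨j,l⟩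
  fin_cases i <;> fin_cases k <;> fin_cases j <;> fin_cases l <;>
    simp [-Prod.mk_zero_zero, -Prod.mk_one_one, Matrix.conjTranspose_apply, Complex.conj_ofReal, map_add, _root_.map_mul,
      map_ofNat, map_div₀, _root_.map_one]

lemma rho2_trace (a : ℝ) (ha0 : 0 < a) : (rho2 a).trace = 1 := by
  have ht := ht' a ha0
  rw [rho2_eq]
  simp [-Prod.mk_zero_zero, -Prod.mk_one_one, Matrix.trace, Matrix.diag, Fintype.sum_prod_type, Fin.sum_univ_two, Fin.sum_univ_three]
  field_simp
  ring


lemma rho2_psd (a : ℝ) (ha0 : 0 < a) (ha1 : a ≤ 1) : (rho2 a).PosSemidef := by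
  refine Matrix.PosSemidef.of_dotProduct_mulVec_nonneg (rho2_herm a) fun x => ?_
  have key : star x ⬝ᵥ (rho2 a) *ᵥ x =
      (((a * Complex.normSq (2*(x (0,0))+(x (1,1))) + (1-a) * Complex.normSq (x (0,0))
        + a * Complex.normSq ((x (0,1))+2*(x (1,2))) + (1-a) * Complex.normSq (x (1,2)))
          / (8*a+2) : ℝ) : ℂ) := by
    rw [rho2_eq]
    simp only [dotProduct, mulVec, Fintype.sum_prod_type, Fin.sum_univ_two, Fin.sum_univ_three,
      Pi.star_apply, Matrix.of_apply, ent_00_00, ent_00_01, ent_00_02, ent_00_10, ent_00_11, ent_00_12,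
      ent_01_00, ent_01_01, ent_01_02, ent_01_10, ent_01_11, ent_01_12,
      ent_02_00, ent_02_01, ent_02_02, ent_02_10, ent_02_11, ent_02_12,
      ent_10_00, ent_10_01, ent_10_02, ent_10_10, ent_10_11, ent_10_12,
      ent_11_00, ent_11_01, ent_11_02, ent_11_10, ent_11_11, ent_11_12,
      ent_12_00, ent_12_01, ent_12_02, ent_12_10, ent_12_11, ent_12_12]
    push_cast
    simp only [Complex.normSq_eq_conj_mul_self]
    simp only [map_add, _root_.map_mul, map_ofNat, Complex.conj_ofReal, map_sub, _root_.map_one,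
      map_div₀, Complex.star_def]
    have h2 := ht' a ha0
    field_simp
    ring
  rw [key]
  have hn : (0:ℝ) ≤ (a * Complex.normSq (2*(x (0,0))+(x (1,1))) + (1-a) * Complex.normSq (x (0,0))
        + a * Complex.normSq ((x (0,1))+2*(x (1,2))) + (1-a) * Complex.normSq (x (1,2))) / (8*a+2) := by
    have h1 := Complex.normSq_nonneg (2*(x (0,0))+(x (1,1)))
    have h2 := Complex.normSq_nonneg (x (0,0))
    have h3 := Complex.normSq_nonneg ((x (0,1))+2*(x (1,2)))
    have h4 := Complex.normSq_nonneg (x (1,2))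
    apply div_nonneg ?_ (by nlinarith)
    nlinarith
  exact_mod_cast Complex.zero_le_real.2 hn


lemma hr17 : ((Real.sqrt 17 : ℝ) : ℂ) ^ 2 = 17 := by
  rw [← Complex.ofReal_pow, Real.sq_sqrt (by norm_num : (17:ℝ) ≥ 0)]
  norm_num

lemma hrne : ((Real.sqrt 17 : ℝ) : ℂ) ≠ 0 := by
  simp [Real.sqrt_eq_zero']

lemma matS_herm (a : ℝ) : (matS a).IsHermitian := by
  ext ⟨i,k⟩ ⟨j,l⟩
  fin_cases i <;> fin_cases k <;> fin_cases j <;> fin_cases l <;>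
    simp [-Prod.mk_zero_zero, -Prod.mk_one_one, Matrix.conjTranspose_apply, Complex.conj_ofReal,
      map_add, _root_.map_mul, map_ofNat, map_div₀, _root_.map_one]

set_option maxHeartbeats 3200000 in
lemma matS_sq (a : ℝ) (ha0 : 0 < a) :
    matS a * matS a = ptranspose (rho2 a) * ptranspose (rho2 a) := by
  have ht := ht' a ha0
  have hrn := hrne
  rw [ptrans_eq]
  ext ⟨i,k⟩ ⟨j,l⟩
  fin_cases i <;> fin_cases k <;> fin_cases j <;> fin_cases l <;>
    simp only [Fin.mk_zero, Fin.mk_one, Fin.reduceFinMk, Matrix.mul_apply, Matrix.of_apply, Fintype.sum_prod_type, Fin.sum_univ_two, Fin.sum_univ_three,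
      entX_00_00, entX_00_01, entX_00_02, entX_00_10, entX_00_11, entX_00_12, entX_01_00, entX_01_01, entX_01_02, entX_01_10, entX_01_11, entX_01_12, entX_02_00, entX_02_01, entX_02_02, entX_02_10, entX_02_11, entX_02_12, entX_10_00, entX_10_01, entX_10_02, entX_10_10, entX_10_11, entX_10_12, entX_11_00, entX_11_01, entX_11_02, entX_11_10, entX_11_11, entX_11_12, entX_12_00, entX_12_01, entX_12_02, entX_12_10, entX_12_11, entX_12_12, matS_00_00, matS_00_01, matS_00_02, matS_00_10, matS_00_11, matS_00_12, matS_01_00, matS_01_01, matS_01_02, matS_01_10, matS_01_11, matS_01_12, matS_02_00, matS_02_01, matS_02_02, matS_02_10, matS_02_11, matS_02_12, matS_10_00, matS_10_01, matS_10_02, matS_10_10, matS_10_11, matS_10_12, matS_11_00, matS_11_01, matS_11_02, matS_11_10, matS_11_11, matS_11_12, matS_12_00, matS_12_01, matS_12_02, matS_12_10, matS_12_11, matS_12_12, mul_zero, zero_mul, add_zero, zero_add] <;>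
    (try field_simp) <;> (try ring_nf) <;> (try simp only [hr17]) <;> (try ring_nf) <;> (try ring)


lemma hrpos : (0:ℝ) < Real.sqrt 17 := Real.sqrt_pos.2 (by norm_num)

set_option maxHeartbeats 3200000 in
lemma matS_psd (a : ℝ) (ha0 : 0 < a) : (matS a).PosSemidef := by
  refine Matrix.PosSemidef.of_dotProduct_mulVec_nonneg (matS_herm a) fun x => ?_
  have key : star x ⬝ᵥ (matS a) *ᵥ x =
      ((((3*a+1)/(8*a+2))*(Complex.normSq (x (0,0)) + Complex.normSq (x (1,2)))
        + (a*Real.sqrt 17/(17*(8*a+2)))*(Complex.normSq (3*(x (0,1))+(2/3)*(x (1,0)))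
          + (68/9)*Complex.normSq (x (1,0)) + Complex.normSq (3*(x (1,1))+(2/3)*(x (0,2)))
          + (68/9)*Complex.normSq (x (0,2))) : ℝ) : ℂ) := by
    have ht := ht' a ha0
    simp only [dotProduct, mulVec, Fintype.sum_prod_type, Fin.sum_univ_two, Fin.sum_univ_three,
      Pi.star_apply, matS_00_00, matS_00_01, matS_00_02, matS_00_10, matS_00_11, matS_00_12, matS_01_00, matS_01_01, matS_01_02, matS_01_10, matS_01_11, matS_01_12, matS_02_00, matS_02_01, matS_02_02, matS_02_10, matS_02_11, matS_02_12, matS_10_00, matS_10_01, matS_10_02, matS_10_10, matS_10_11, matS_10_12, matS_11_00, matS_11_01, matS_11_02, matS_11_10, matS_11_11, matS_11_12, matS_12_00, matS_12_01, matS_12_02, matS_12_10, matS_12_11, matS_12_12, mul_zero, zero_mul, add_zero, zero_add]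
    push_cast
    simp only [Complex.normSq_eq_conj_mul_self]
    simp only [map_add, _root_.map_mul, map_ofNat, Complex.conj_ofReal, map_sub, _root_.map_one,
      map_div₀, Complex.star_def]
    field_simp
    ring
  rw [key]
  have h3 := Complex.normSq_nonneg (x (0,0))
  have h4 := Complex.normSq_nonneg (x (1,2))
  have h5 := Complex.normSq_nonneg (3*(x (0,1))+(2/3)*(x (1,0)))
  have h6 := Complex.normSq_nonneg (x (1,0))
  have h7 := Complex.normSq_nonneg (3*(x (1,1))+(2/3)*(x (0,2)))
  have h8 := Complex.normSq_nonneg (x (0,2))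
  have hr := hrpos
  apply Complex.zero_le_real.2
  have c1 : (0:ℝ) ≤ (3*a+1)/(8*a+2) := by positivity
  have c2 : (0:ℝ) ≤ a*Real.sqrt 17/(17*(8*a+2)) := by positivity
  nlinarith [mul_nonneg c1 (add_nonneg h3 h4), mul_nonneg c2 (by nlinarith : (0:ℝ) ≤ Complex.normSq (3*(x (0,1))+(2/3)*(x (1,0))) + (68/9)*Complex.normSq (x (1,0)) + Complex.normSq (3*(x (1,1))+(2/3)*(x (0,2))) + (68/9)*Complex.normSq (x (0,2)))]

set_option maxHeartbeats 3200000 in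
lemma ptrans_herm (a : ℝ) : (ptranspose (rho2 a))ᴴ = ptranspose (rho2 a) := by
  rw [ptrans_eq]
  ext ⟨i,k⟩ ⟨j,l⟩
  fin_cases i <;> fin_cases k <;> fin_cases j <;> fin_cases l <;>
    simp [-Prod.mk_zero_zero, -Prod.mk_one_one, Matrix.conjTranspose_apply, Complex.conj_ofReal,
      map_add, _root_.map_mul, map_ofNat, map_div₀, _root_.map_one]

set_option maxHeartbeats 3200000 in
lemma matS_trace (a : ℝ) (ha0 : 0 < a) :
    (matS a).trace = (((6*a+2)/(8*a+2) + 34*a*Real.sqrt 17/(17*(8*a+2)) : ℝ) : ℂ) := by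
  have ht := ht' a ha0
  simp only [Matrix.trace, Matrix.diag, Fintype.sum_prod_type, Fin.sum_univ_two,
    Fin.sum_univ_three, matS_00_00, matS_00_01, matS_00_02, matS_00_10, matS_00_11, matS_00_12, matS_01_00, matS_01_01, matS_01_02, matS_01_10, matS_01_11, matS_01_12, matS_02_00, matS_02_01, matS_02_02, matS_02_10, matS_02_11, matS_02_12, matS_10_00, matS_10_01, matS_10_02, matS_10_10, matS_10_11, matS_10_12, matS_11_00, matS_11_01, matS_11_02, matS_11_10, matS_11_11, matS_11_12, matS_12_00, matS_12_01, matS_12_02, matS_12_10, matS_12_11, matS_12_12]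
  push_cast
  field_simp
  ring

lemma traceNorm_val (a : ℝ) (ha0 : 0 < a) :
    traceNorm (ptranspose (rho2 a)) = (6*a+2)/(8*a+2) + 34*a*Real.sqrt 17/(17*(8*a+2)) := by
  have hsq : matS a ^ 2 = (ptranspose (rho2 a))ᴴ * ptranspose (rho2 a) := by
    rw [pow_two, matS_sq a ha0, ptrans_herm]
  have hH := (Matrix.posSemidef_conjTranspose_mul_self (ptranspose (rho2 a))).1
  have hS : hH.cfc Real.sqrt = matS a := by
    have hsa : IsSelfAdjoint (matS a) := matS_herm a
    rw [← Matrix.IsHermitian.cfc_eq, ← hsq, ← cfc_comp_pow Real.sqrt 2 (matS a) Real.continuous_sqrt.continuousOn hsa]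
    conv_rhs => rw [← cfc_id' ℝ (matS a) hsa]
    refine cfc_congr fun x hx => ?_
    have hx0 : 0 ≤ x := by
      obtain ⟨i, rfl⟩ := (matS_herm a).spectrum_real_eq_range_eigenvalues ▸ hx
      exact (matS_psd a ha0).eigenvalues_nonneg i
    exact Real.sqrt_sq hx0
  rw [traceNorm]
  change (hH.cfc Real.sqrt).trace.re = _
  rw [hS, matS_trace a ha0, Complex.ofReal_re]


def stdb : Fin 2 → Fin 2 → ℂ := fun k i => if i = k then 1 else 0

lemma stdb_onb : IsONB stdb := by
  intro k l
  fin_cases k <;> fin_cases l <;> simp [stdb, Fin.sum_univ_two]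

lemma proj_kron (k : Fin 2) :
    proj (stdb k) ⊗ₖ (1 : Matrix (Fin 3) (Fin 3) ℂ) =
      Matrix.diagonal (fun p : Fin 2 × Fin 3 => if p.1 = k then 1 else 0) := by
  ext ⟨i,k'⟩ ⟨j,l⟩
  fin_cases k <;> fin_cases i <;> fin_cases k' <;> fin_cases j <;> fin_cases l <;>
    simp [proj, stdb, Matrix.vecMulVec_apply, Matrix.kroneckerMap_apply, Matrix.diagonal,
      Matrix.one_apply, Prod.ext_iff]

set_option maxHeartbeats 3200000 in
lemma hdiff (a : ℝ) :
    rho2 a - piA stdb (rho2 a) = Matrix.of fun p q => (1/(8*(a:ℂ)+2)) * entD a p q := by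
  rw [piA, Fin.sum_univ_two, proj_kron, proj_kron, rho2_eq]
  ext ⟨i,k⟩ ⟨j,l⟩
  fin_cases i <;> fin_cases k <;> fin_cases j <;> fin_cases l <;>
    simp [-Prod.mk_zero_zero, -Prod.mk_one_one, Matrix.sub_apply, Matrix.add_apply,
      Matrix.diagonal_mul, Matrix.mul_diagonal] <;> (try ring)

lemma hsNormSq_eq {d : Type*} [Fintype d] (C : Matrix d d ℂ) :
    hsNormSq C = ∑ p, ∑ q, Complex.normSq (C q p) := by
  simp only [hsNormSq, Matrix.trace, Matrix.diag, Matrix.mul_apply, Matrix.conjTranspose_apply,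
    ← Complex.normSq_eq_conj_mul_self]
  push_cast
  simp [Complex.normSq_apply]

lemma hsNormSq_nonneg {d : Type*} [Fintype d] (C : Matrix d d ℂ) : 0 ≤ hsNormSq C := by
  rw [hsNormSq_eq]
  apply Finset.sum_nonneg
  intro p _
  apply Finset.sum_nonneg
  intro q _
  exact Complex.normSq_nonneg _

set_option maxHeartbeats 3200000 in
lemma hs_val (a : ℝ) (ha0 : 0 < a) :
    hsNormSq (rho2 a - piA stdb (rho2 a)) = 16*a^2/(8*a+2)^2 := by
  have ht : (8*a+2) ≠ 0 := by nlinarith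
  rw [hdiff, hsNormSq_eq]
  simp only [Fintype.sum_prod_type, Fin.sum_univ_two, Fin.sum_univ_three, Matrix.of_apply, entD_00_00, entD_00_01, entD_00_02, entD_00_10, entD_00_11, entD_00_12, entD_01_00, entD_01_01, entD_01_02, entD_01_10, entD_01_11, entD_01_12, entD_02_00, entD_02_01, entD_02_02, entD_02_10, entD_02_11, entD_02_12, entD_10_00, entD_10_01, entD_10_02, entD_10_10, entD_10_11, entD_10_12, entD_11_00, entD_11_01, entD_11_02, entD_11_10, entD_11_11, entD_11_12, entD_12_00, entD_12_01, entD_12_02, entD_12_10, entD_12_11, entD_12_12, mul_zero,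
    Complex.normSq_mul, Complex.normSq_zero, zero_add, add_zero, mul_one, mul_zero]
  simp only [Complex.normSq_div, Complex.normSq_one, Complex.normSq_mul]
  have h1 : Complex.normSq (8*(a:ℂ)+2) = (8*a+2)^2 := by
    have : (8*(a:ℂ)+2) = ((8*a+2 : ℝ) : ℂ) := by push_cast; ring
    rw [this, Complex.normSq_ofReal]; ring
  have h2 : Complex.normSq (2*(a:ℂ)) = 4*a^2 := by
    have : (2*(a:ℂ)) = ((2*a : ℝ) : ℂ) := by push_cast; ring
    rw [this, Complex.normSq_ofReal]; ring
  have h3 : Complex.normSq (2:ℂ) = 4 := by norm_num [Complex.normSq_apply]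
  have h4 : Complex.normSq ((a:ℝ):ℂ) = a^2 := by rw [Complex.normSq_ofReal]; ring
  simp only [h1, h2, h3, h4]
  field_simp
  ring


lemma gd_le (a : ℝ) (ha0 : 0 < a) : gd (rho2 a) ≤ 32*a^2/(8*a+2)^2 := by
  have hb : BddBelow (Set.range fun ψ : {ψ : Fin 2 → (Fin 2 → ℂ) // IsONB ψ} =>
      hsNormSq (rho2 a - piA ψ.1 (rho2 a))) := by
    refine ⟨0, ?_⟩
    rintro y ⟨ψ, rfl⟩
    exact hsNormSq_nonneg _
  have hle := ciInf_le hb ⟨stdb, stdb_onb⟩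
  rw [gd]
  have h2 : ((2:ℕ):ℝ)/(((2:ℕ):ℝ)-1) = 2 := by norm_num
  rw [h2]
  calc 2 * ⨅ ψ : {ψ : Fin 2 → (Fin 2 → ℂ) // IsONB ψ}, hsNormSq (rho2 a - piA ψ.1 (rho2 a))
      ≤ 2 * hsNormSq (rho2 a - piA stdb (rho2 a)) := by linarith
    _ = 32*a^2/(8*a+2)^2 := by rw [hs_val a ha0]; ring

lemma neg_val (a : ℝ) (ha0 : 0 < a) :
    negativity (rho2 a) = (2*Real.sqrt 17*a - 2*a)/(8*a+2) := by
  have ht : (8*a+2) ≠ 0 := by nlinarith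
  rw [negativity, traceNorm_val a ha0]
  norm_num
  field_simp
  ring

theorem final (a : ℝ) (ha0 : 0 < a) (ha1 : a ≤ 1) :
    IsState (rho2 a) ∧ gd (rho2 a) < negativity (rho2 a) ^ 2 := by
  refine ⟨⟨rho2_psd a ha0 ha1, rho2_trace a ha0⟩, ?_⟩
  have h1 := gd_le a ha0
  rw [neg_val a ha0]
  have hr2 : Real.sqrt 17 ^ 2 = 17 := Real.sq_sqrt (by norm_num)
  have hrp : (0:ℝ) < Real.sqrt 17 := hrpos
  have hrlt : Real.sqrt 17 < 5 := by nlinarith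
  have hrgt : 1 < Real.sqrt 17 := by nlinarith
  have ht : (0:ℝ) < 8*a+2 := by nlinarith
  have key : 32*a^2/(8*a+2)^2 < ((2*Real.sqrt 17*a - 2*a)/(8*a+2))^2 := by
    rw [div_pow, div_lt_div_iff₀ (by positivity) (by positivity)]
    have hf : 32*a^2 < (2*Real.sqrt 17*a - 2*a)^2 := by
      nlinarith [mul_pos (mul_pos ha0 ha0) (by linarith : (0:ℝ) < 5 - Real.sqrt 17)]
    exact mul_lt_mul_of_pos_right hf (by positivity)
  linarith


theorem stmt14 (a : ℝ) (ha0 : 0 < a) (ha1 : a ≤ 1)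
    (ρ : Matrix (Fin 2 × Fin 3) (Fin 2 × Fin 3) ℂ)
    (hρ : ρ = ofM6 ((1 / (8 * (a : ℂ) + 2)) •
      !![3*(a:ℂ)+1, 0, 0, 0, 2*(a:ℂ), 0;
         0, (a:ℂ), 0, 0, 0, 2*(a:ℂ);
         0, 0, 0, 0, 0, 0;
         0, 0, 0, 0, 0, 0;
         2*(a:ℂ), 0, 0, 0, (a:ℂ), 0;
         0, 2*(a:ℂ), 0, 0, 0, 3*(a:ℂ)+1])) :
    IsState ρ ∧ gd ρ < negativity ρ ^ 2 := by
  have h : ρ = rho2 a := hρ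
  rw [h]
  exact final a ha0 ha1

end
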